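/- arXiv:1703.09535 — 3 statements merged into one kernel-verified Lean document; each statement's English description precedes it below -/
import Mathlib

section
/- Let X be a topological space, n ≥ 1 an integer, and P a map assigning to each ζ ∈ X a monic complex polynomial P(ζ) of degree n whose coefficients depend continuously on ζ. Let ξ ∈ X, let w_1,…,w_m be the distinct zeros of P(ξ), and let n_j be the multiplicity of w_j as a zero of P(ξ). Then ξ is NOT a splitting point of the zeros of P if and only if there exist an open neighborhood U of ξ and continuous functions λ_1,…,λ_m : U → ℂ such that λ_j(ξ) = w_j for 1 ≤ j ≤ m, and for each ζ ∈ U the values λ_1(ζ),…,λ_m(ζ) are pairwise distinct, are exactly the zeros of P(ζ), and λ_j(ζ) has multiplicity n_j as a zero of P(ζ). -/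
open Polynomial Filter Finset

namespace SplitAux




lemma msp_pow_le (s : Multiset ℝ) {ε : ℝ} (hε : 0 ≤ ε) (h : ∀ x ∈ s, ε ≤ x) :
    ε ^ Multiset.card s ≤ s.prod := by
  induction s using Multiset.induction with
  | empty => simp
  | cons a s ih =>
    have ha : ε ≤ a := h a (Multiset.mem_cons_self _ _)
    have hs : ∀ x ∈ s, ε ≤ x := fun x hx => h x (Multiset.mem_cons_of_mem hx)
    simp only [Multiset.card_cons, Multiset.prod_cons, pow_succ]
    calc ε ^ Multiset.card s * ε ≤ s.prod * a := by
          apply mul_le_mul (ih hs) ha hε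
          exact le_trans (pow_nonneg hε _) (ih hs)
      _ = a * s.prod := mul_comm _ _

lemma norm_mprod (s : Multiset ℂ) : ‖s.prod‖ = (s.map (fun z => ‖z‖)).prod := by
  induction s using Multiset.induction with
  | empty => simp
  | cons a s ih => simp [norm_mul, ih]

lemma eval_prod_roots {p : ℂ[X]} (hp : p.Monic) (t : ℂ) :
    p.eval t = (p.roots.map (fun r => t - r)).prod := by
  conv_lhs => rw [(IsAlgClosed.splits p).eq_prod_roots_of_monic hp]
  rw [eval_multiset_prod, Multiset.map_map]
  simp

lemma exists_root_near {p : ℂ[X]} (hp : p.Monic) (t : ℂ) {ε : ℝ} (hε : 0 < ε)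
    (h : ‖p.eval t‖ < ε ^ Multiset.card p.roots) :
    ∃ r ∈ p.roots, dist t r < ε := by
  by_contra hc
  push_neg at hc
  have hle : ε ^ Multiset.card p.roots ≤ ‖p.eval t‖ := by
    rw [eval_prod_roots hp, norm_mprod, Multiset.map_map]
    have hcard : Multiset.card (p.roots.map (fun r => ‖t - r‖)) = Multiset.card p.roots := by
      simp
    rw [← hcard]
    refine msp_pow_le _ hε.le ?_
    intro x hx
    obtain ⟨r, hr, rfl⟩ := Multiset.mem_map.mp hx
    simpa [dist_eq_norm] using hc r hr
  exact absurd h (not_lt.mpr hle)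

lemma card_roots_monic {p : ℂ[X]} : Multiset.card p.roots = p.natDegree :=
  Polynomial.splits_iff_card_roots.mp (IsAlgClosed.splits p)

lemma root_bound {p : ℂ[X]} (hp : p.Monic) {z : ℂ} (hz : p.IsRoot z) :
    ‖z‖ ≤ 1 + ∑ i ∈ Finset.range p.natDegree, ‖p.coeff i‖ := by
  have hsum0 : (0:ℝ) ≤ ∑ i ∈ Finset.range p.natDegree, ‖p.coeff i‖ :=
    Finset.sum_nonneg fun _ _ => norm_nonneg _
  by_cases h1 : ‖z‖ ≤ 1
  · linarith
  push_neg at h1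
  rcases Nat.eq_zero_or_pos p.natDegree with hn | hn
  · exfalso
    have : p = 1 := hp.natDegree_eq_zero.mp hn
    simp [this, IsRoot] at hz
  set n := p.natDegree with hndef
  have hev : (0:ℂ) = ∑ i ∈ Finset.range (n+1), p.coeff i * z ^ i := by
    rw [← Polynomial.eval_eq_sum_range]
    exact hz.symm
  rw [Finset.sum_range_succ, hp.coeff_natDegree] at hev
  have hzn : (z : ℂ) ^ n = -∑ i ∈ Finset.range n, p.coeff i * z ^ i := by
    rw [eq_neg_iff_add_eq_zero]
    rw [one_mul] at hev
    linear_combination -hev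
  have hnorm : ‖z‖ ^ n ≤ ∑ i ∈ Finset.range n, ‖p.coeff i‖ * ‖z‖ ^ i := by
    calc ‖z‖ ^ n = ‖z ^ n‖ := (norm_pow _ _).symm
      _ = ‖∑ i ∈ Finset.range n, p.coeff i * z ^ i‖ := by rw [hzn, norm_neg]
      _ ≤ ∑ i ∈ Finset.range n, ‖p.coeff i * z ^ i‖ := norm_sum_le _ _
      _ = ∑ i ∈ Finset.range n, ‖p.coeff i‖ * ‖z‖ ^ i := by
          simp [norm_mul, norm_pow]
  have hstep : ∑ i ∈ Finset.range n, ‖p.coeff i‖ * ‖z‖ ^ i ≤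
      (∑ i ∈ Finset.range n, ‖p.coeff i‖) * ‖z‖ ^ (n - 1) := by
    rw [Finset.sum_mul]
    refine Finset.sum_le_sum fun i hi => ?_
    have : ‖z‖ ^ i ≤ ‖z‖ ^ (n - 1) :=
      pow_le_pow_right₀ h1.le (Nat.le_sub_one_of_lt (Finset.mem_range.mp hi))
    exact mul_le_mul_of_nonneg_left this (norm_nonneg _)
  have hpow : ‖z‖ ^ n = ‖z‖ ^ (n - 1) * ‖z‖ := by
    rw [← pow_succ, Nat.sub_add_cancel hn]
  have hposz : (0:ℝ) < ‖z‖ ^ (n - 1) := pow_pos (lt_trans one_pos h1) _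
  have : ‖z‖ ^ (n - 1) * ‖z‖ ≤ ‖z‖ ^ (n-1) * (∑ i ∈ Finset.range n, ‖p.coeff i‖) := by
    rw [← hpow]
    calc ‖z‖ ^ n ≤ _ := le_trans hnorm hstep
      _ = _ := mul_comm _ _
  have := le_of_mul_le_mul_left this hposz
  linarith






lemma eval_sub_bound {p q : ℂ[X]} {n : ℕ} (hn : 0 < n) (hp : p.Monic) (hq : q.Monic)
    (hpdeg : p.natDegree = n) (hqdeg : q.natDegree = n) (t : ℂ) {δ M : ℝ} (hM : 1 ≤ M)
    (ht : ‖t‖ ≤ M) (hd : ∀ i < n, ‖p.coeff i - q.coeff i‖ ≤ δ) :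
    ‖p.eval t - q.eval t‖ ≤ n * (δ * M ^ n) := by
  have hδ0 : 0 ≤ δ := le_trans (norm_nonneg _) (hd 0 hn)
  have hr : (p - q).natDegree < n := by
    rcases eq_or_ne (p - q) 0 with h0 | h0
    · rw [h0]; simpa using hn
    · refine lt_of_le_of_ne (le_trans (Polynomial.natDegree_sub_le p q) (by simp [hpdeg, hqdeg])) ?_
      intro hcon
      have hcp : p.coeff n = 1 := by rw [← hpdeg]; exact hp.coeff_natDegree
      have hcq : q.coeff n = 1 := by rw [← hqdeg]; exact hq.coeff_natDegree
      have : (p - q).coeff n = 0 := by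
        rw [Polynomial.coeff_sub, hcp, hcq, sub_self]
      exact Polynomial.leadingCoeff_ne_zero.mpr h0 (by rwa [Polynomial.leadingCoeff, hcon])
  have hev : p.eval t - q.eval t = ∑ i ∈ Finset.range n, (p - q).coeff i * t ^ i := by
    rw [← Polynomial.eval_sub, Polynomial.eval_eq_sum_range' hr]
  rw [hev]
  calc ‖∑ i ∈ Finset.range n, (p - q).coeff i * t ^ i‖
      ≤ ∑ i ∈ Finset.range n, ‖(p - q).coeff i * t ^ i‖ := norm_sum_le _ _
    _ ≤ ∑ _i ∈ Finset.range n, δ * M ^ n := by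
        refine Finset.sum_le_sum fun i hi => ?_
        rw [norm_mul, norm_pow]
        have h1 : ‖(p - q).coeff i‖ ≤ δ := by
          simpa [Polynomial.coeff_sub] using hd i (Finset.mem_range.mp hi)
        have h2 : ‖t‖ ^ i ≤ M ^ n := by
          calc ‖t‖ ^ i ≤ M ^ i := pow_le_pow_left₀ (norm_nonneg _) ht _
            _ ≤ M ^ n := pow_le_pow_right₀ hM (le_of_lt (Finset.mem_range.mp hi))
        exact mul_le_mul h1 h2 (by positivity) hδ0
    _ = n * (δ * M ^ n) := by simp [Finset.sum_const, Finset.card_range, nsmul_eq_mul]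

lemma exists_sep {m : ℕ} (w : Fin m → ℂ) (hw : Function.Injective w) :
    ∃ ε : ℝ, 0 < ε ∧ ∀ j k : Fin m, j ≠ k → 3 * ε < dist (w j) (w k) := by
  classical
  rcases (Finset.univ.filter (fun p : Fin m × Fin m => p.1 ≠ p.2)).eq_empty_or_nonempty with he | hne
  · refine ⟨1, one_pos, fun j k hjk => ?_⟩
    exfalso
    have : (j, k) ∈ Finset.univ.filter (fun p : Fin m × Fin m => p.1 ≠ p.2) :=
      Finset.mem_filter.mpr ⟨Finset.mem_univ _, hjk⟩
    rw [he] at this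
    exact absurd this (Finset.notMem_empty _)
  · obtain ⟨p₀, hp₀mem, hp₀min⟩ :=
      Finset.exists_min_image (Finset.univ.filter (fun p : Fin m × Fin m => p.1 ≠ p.2))
        (fun p => dist (w p.1) (w p.2)) hne
    have hp₀ : p₀.1 ≠ p₀.2 := (Finset.mem_filter.mp hp₀mem).2
    have hDpos : 0 < dist (w p₀.1) (w p₀.2) := dist_pos.mpr fun h => hp₀ (hw h)
    refine ⟨dist (w p₀.1) (w p₀.2) / 4, by linarith, fun j k hjk => ?_⟩
    have hle := hp₀min (j, k) (Finset.mem_filter.mpr ⟨Finset.mem_univ _, hjk⟩)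
    simp only at hle
    linarith

lemma card_eq_of_roots {m : ℕ} {p : ℂ[X]} (a : Fin m → ℂ) (ha : Function.Injective a)
    (h : ∀ z, z ∈ p.roots.toFinset ↔ ∃ j, a j = z) : p.roots.toFinset.card = m := by
  classical
  have : p.roots.toFinset = Finset.image a Finset.univ := by
    ext z
    simp [h z, eq_comm]
  rw [this, Finset.card_image_of_injective _ ha, Finset.card_univ, Fintype.card_fin]

lemma map_finsum {ι β γ : Type*} (s : Finset ι) (g : ι → Multiset β) (f : β → γ) :
    Multiset.map f (∑ i ∈ s, g i) = ∑ i ∈ s, Multiset.map f (g i) :=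
  map_sum (Multiset.mapAddMonoidHom f) g s

lemma roots_eq_sum {m : ℕ} {p : ℂ[X]} (hp : p ≠ 0) {a : Fin m → ℂ}
    (hainj : Function.Injective a) (hroots : ∀ z ∈ p.roots, ∃ j, a j = z) :
    p.roots = ∑ j, Multiset.replicate (rootMultiplicity (a j) p) (a j) := by
  classical
  refine Multiset.ext.mpr fun z => ?_
  rw [Polynomial.count_roots, Multiset.count_sum']
  by_cases hz : ∃ j, a j = z
  · obtain ⟨j₀, rfl⟩ := hz
    rw [Finset.sum_eq_single j₀]
    · simp [Multiset.count_replicate]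
    · intro j _ hj
      rw [Multiset.count_replicate, if_neg (fun h => hj (hainj h))]
    · simp
  · push_neg at hz
    have h0 : rootMultiplicity z p = 0 := by
      refine Polynomial.rootMultiplicity_eq_zero fun hroot => ?_
      obtain ⟨j, hj⟩ := hroots z (by rwa [Polynomial.mem_roots hp])
      exact hz j hj
    rw [h0]
    symm
    refine Finset.sum_eq_zero fun j _ => ?_
    rw [Multiset.count_replicate, if_neg (hz j)]

lemma eval_eq_prod_pow {m : ℕ} {p : ℂ[X]} (hp : p.Monic) {a : Fin m → ℂ}
    (hainj : Function.Injective a) (hroots : ∀ z ∈ p.roots, ∃ j, a j = z) (t : ℂ) :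
    p.eval t = ∏ j, (t - a j) ^ (rootMultiplicity (a j) p) := by
  have h1 : p.eval t = (p.roots.map (fun r => t - r)).prod := by
    conv_lhs => rw [(IsAlgClosed.splits p).eq_prod_roots_of_monic hp]
    rw [eval_multiset_prod, Multiset.map_map]
    simp
  rw [h1, roots_eq_sum hp.ne_zero hainj hroots, map_finsum]
  simp only [Multiset.map_replicate]
  rw [Multiset.prod_sum]
  simp [Multiset.prod_replicate]

lemma rootMultiplicity_prod_pow {m : ℕ} {a : Fin m → ℂ} (hainj : Function.Injective a)
    (v : Fin m → ℕ) (j : Fin m) :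
    rootMultiplicity (a j) (∏ k, (X - C (a k)) ^ (v k)) = v j := by
  classical
  have hne : (∏ k, ((X : ℂ[X]) - C (a k)) ^ (v k)) ≠ 0 := by
    refine Finset.prod_ne_zero_iff.mpr fun k _ => pow_ne_zero _ (Polynomial.X_sub_C_ne_zero _)
  rw [← Polynomial.count_roots, Polynomial.roots_prod _ _ hne]
  rw [Multiset.count_bind]
  simp only [Polynomial.roots_pow, Polynomial.roots_X_sub_C]
  have : ∀ k : Fin m, Multiset.count (a j) ((v k) • ({a k} : Multiset ℂ)) =
      if k = j then v j else 0 := by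
    intro k
    rw [Multiset.nsmul_singleton, Multiset.count_replicate]
    split_ifs with h h2 h3
    · rw [h2]
    · exact absurd (hainj h) h2
    · exact absurd (congrArg a h3) h
    · rfl
  calc (Multiset.map (fun k => Multiset.count (a j) ((v k) • ({a k} : Multiset ℂ)))
        Finset.univ.val).sum
      = (Multiset.map (fun k => if k = j then v j else 0) Finset.univ.val).sum := by
        congr 1
        exact Multiset.map_congr rfl (fun k _ => this k)
    _ = ∑ k : Fin m, (if k = j then v j else 0) := rfl
    _ = v j := by simp

lemma monic_prod_pow {m : ℕ} (a : Fin m → ℂ) (v : Fin m → ℕ) :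
    (∏ k, ((X : ℂ[X]) - C (a k)) ^ (v k)).Monic :=
  monic_prod_of_monic _ _ fun k _ => (monic_X_sub_C (a k)).pow (v k)

lemma eval_prod_pow {m : ℕ} (a : Fin m → ℂ) (v : Fin m → ℕ) (t : ℂ) :
    (∏ k, ((X : ℂ[X]) - C (a k)) ^ (v k)).eval t = ∏ k, (t - a k) ^ (v k) := by
  simp [Polynomial.eval_prod]


variable {X : Type*} [TopologicalSpace X]

lemma continuous_eval {n : ℕ} (P : X → Polynomial ℂ) (hdeg : ∀ ζ, (P ζ).natDegree = n)
    (hcont : ∀ i : ℕ, Continuous fun ζ => (P ζ).coeff i) (t : ℂ) :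
    Continuous fun ζ => (P ζ).eval t := by
  have h : (fun ζ => (P ζ).eval t) =
      fun ζ => ∑ i ∈ Finset.range (n + 1), (P ζ).coeff i * t ^ i := by
    funext ζ
    rw [Polynomial.eval_eq_sum_range' (by rw [hdeg ζ]; exact Nat.lt_succ_self n)]
  rw [h]
  exact continuous_finset_sum _ fun i _ => (hcont i).mul continuous_const

lemma roots_close {n : ℕ} (hn : 1 ≤ n) (P : X → Polynomial ℂ)
    (hmonic : ∀ ζ, (P ζ).Monic) (hdeg : ∀ ζ, (P ζ).natDegree = n)
    (hcont : ∀ i : ℕ, Continuous fun ζ => (P ζ).coeff i) (x : X) {ε : ℝ} (hε : 0 < ε) :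
    ∀ᶠ ζ in nhds x, (∀ z ∈ (P ζ).roots, ∃ u ∈ (P x).roots, dist z u < ε) ∧
      (∀ u ∈ (P x).roots, ∃ z ∈ (P ζ).roots, dist z u < ε) := by
  have hn0 : 0 < n := hn
  set S : ℝ := ∑ i ∈ Finset.range n, ‖(P x).coeff i‖ with hSdef
  have hS0 : 0 ≤ S := Finset.sum_nonneg fun _ _ => norm_nonneg _
  set R : ℝ := 2 + S with hRdef
  have hR1 : 1 ≤ R := by rw [hRdef]; linarith
  have hRn : (0:ℝ) < R ^ n := pow_pos (by linarith) n
  have hεn : (0:ℝ) < ε ^ n := pow_pos hε n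
  have hnR1 : (0:ℝ) < n * R ^ n + 1 := by positivity
  set δ : ℝ := min (1 / (n + 1)) (ε ^ n / (n * R ^ n + 1)) with hδdef
  have hδpos : 0 < δ := lt_min (by positivity) (by positivity)
  have hδ1 : δ ≤ 1 / (n + 1) := min_le_left _ _
  have hδ2 : δ ≤ ε ^ n / (n * R ^ n + 1) := min_le_right _ _
  have hkey : (n:ℝ) * (δ * R ^ n) < ε ^ n := by
    calc (n:ℝ) * (δ * R ^ n) = (n * R ^ n) * δ := by ring
      _ ≤ (n * R ^ n) * (ε ^ n / (n * R ^ n + 1)) :=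
          mul_le_mul_of_nonneg_left hδ2 (by positivity)
      _ = ε ^ n * ((n * R ^ n) / (n * R ^ n + 1)) := by ring
      _ < ε ^ n * 1 := by
          refine mul_lt_mul_of_pos_left ?_ hεn
          rw [div_lt_one hnR1]
          linarith
      _ = ε ^ n := mul_one _
  have hnδ : (n:ℝ) * δ ≤ 1 := by
    have h1 : (n:ℝ) * δ ≤ n * (1 / (n + 1)) :=
      mul_le_mul_of_nonneg_left hδ1 (Nat.cast_nonneg n)
    have h2 : (n:ℝ) * (1 / (n + 1)) ≤ 1 := by
      rw [mul_one_div, div_le_one (by positivity)]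
      linarith
    linarith
  have hev : ∀ᶠ ζ in nhds x, ∀ i ∈ Finset.range n, ‖(P ζ).coeff i - (P x).coeff i‖ < δ := by
    rw [eventually_all_finset]
    intro i _
    filter_upwards [(hcont i).tendsto x (Metric.ball_mem_nhds ((P x).coeff i) hδpos)] with ζ hζ
    rw [← dist_eq_norm]
    exact hζ
  filter_upwards [hev] with ζ hζ
  have hd : ∀ i < n, ‖(P ζ).coeff i - (P x).coeff i‖ ≤ δ :=
    fun i hi => (hζ i (Finset.mem_range.mpr hi)).le
  have hd' : ∀ i < n, ‖(P x).coeff i - (P ζ).coeff i‖ ≤ δ := by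
    intro i hi; rw [norm_sub_rev]; exact hd i hi
  have hbζ : ∀ z ∈ (P ζ).roots, ‖z‖ ≤ R := by
    intro z hz
    have h1 := root_bound (hmonic ζ) (Polynomial.isRoot_of_mem_roots hz)
    rw [hdeg ζ] at h1
    have h2 : ∑ i ∈ Finset.range n, ‖(P ζ).coeff i‖ ≤ S + n * δ := by
      have h3 : ∑ i ∈ Finset.range n, ‖(P ζ).coeff i‖ ≤
          ∑ i ∈ Finset.range n, (‖(P x).coeff i‖ + δ) := by
        refine Finset.sum_le_sum fun i hi => ?_
        have h4 := norm_sub_norm_le ((P ζ).coeff i) ((P x).coeff i)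
        have h5 := hd i (Finset.mem_range.mp hi)
        linarith
      rw [Finset.sum_add_distrib, Finset.sum_const, Finset.card_range, nsmul_eq_mul] at h3
      exact h3
    rw [hRdef]
    linarith
  constructor
  · intro z hz
    have hzR : ‖z‖ ≤ R := hbζ z hz
    have hz0 : (P ζ).eval z = 0 := Polynomial.isRoot_of_mem_roots hz
    have hQz : ‖(P x).eval z‖ ≤ n * (δ * R ^ n) := by
      have h6 := eval_sub_bound hn0 (hmonic x) (hmonic ζ) (hdeg x) (hdeg ζ) z hR1 hzR hd'
      rwa [hz0, sub_zero] at h6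
    obtain ⟨r, hr, hdr⟩ := exists_root_near (hmonic x) z hε
      (by rw [card_roots_monic, hdeg x]; exact lt_of_le_of_lt hQz hkey)
    exact ⟨r, hr, hdr⟩
  · intro u hu
    have huR : ‖u‖ ≤ R := by
      have h1 := root_bound (hmonic x) (Polynomial.isRoot_of_mem_roots hu)
      rw [hdeg x, ← hSdef] at h1
      rw [hRdef]
      linarith
    have hu0 : (P x).eval u = 0 := Polynomial.isRoot_of_mem_roots hu
    have hQu : ‖(P ζ).eval u‖ ≤ n * (δ * R ^ n) := by
      have h6 := eval_sub_bound hn0 (hmonic ζ) (hmonic x) (hdeg ζ) (hdeg x) u hR1 huR hd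
      rwa [hu0, sub_zero] at h6
    obtain ⟨z, hz, hdz⟩ := exists_root_near (hmonic ζ) u hε
      (by rw [card_roots_monic, hdeg ζ]; exact lt_of_le_of_lt hQu hkey)
    exact ⟨z, hz, by rwa [dist_comm]⟩

lemma key_uniq {m : ℕ} {w : Fin m → ℂ} {ε : ℝ} (hε : 0 < ε)
    (hsep : ∀ j k : Fin m, j ≠ k → 3 * ε < dist (w j) (w k))
    {p : Polynomial ℂ}
    (h1 : ∀ z ∈ p.roots, ∃ j, dist z (w j) < ε)
    (h2 : ∀ j, ∃ z ∈ p.roots, dist z (w j) < ε)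
    (hcard : p.roots.toFinset.card ≤ m) :
    ∀ j : Fin m, ∀ z ∈ p.roots, dist z (w j) < ε →
      ∀ z' ∈ p.roots, dist z' (w j) < ε → z = z' := by
  classical
  choose φ hφroot hφdist using h2
  have hφinj : Function.Injective φ := by
    intro j k h
    by_contra hjk
    have h3 := hsep j k hjk
    have h4 : dist (w j) (w k) ≤ dist (w j) (φ k) + dist (φ k) (w k) := dist_triangle _ _ _
    have h5 : dist (w j) (φ k) < ε := by rw [← h, dist_comm]; exact hφdist j
    have h6 := hφdist k
    linarith
  have hmem : ∀ j, φ j ∈ p.roots.toFinset := fun j => Multiset.mem_toFinset.mpr (hφroot j)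
  let Φ : Fin m → {x // x ∈ p.roots.toFinset} := fun j => ⟨φ j, hmem j⟩
  have hΦinj : Function.Injective Φ := fun j k h => hφinj (congrArg Subtype.val h)
  have hcards : Fintype.card {x // x ∈ p.roots.toFinset} = Fintype.card (Fin m) := by
    rw [Fintype.card_coe, Fintype.card_fin]
    exact le_antisymm hcard
      (by simpa [Fintype.card_coe, Fintype.card_fin] using Fintype.card_le_of_injective Φ hΦinj)
  have hbij : Function.Bijective Φ :=
    (Fintype.bijective_iff_injective_and_card Φ).mpr ⟨hΦinj, hcards.symm⟩
  intro j z hz hzd z' hz' hzd'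
  suffices h : ∀ y ∈ p.roots, dist y (w j) < ε → y = φ j by
    rw [h z hz hzd, h z' hz' hzd']
  intro y hy hyd
  obtain ⟨k, hk⟩ := hbij.2 ⟨y, Multiset.mem_toFinset.mpr hy⟩
  have hyk : φ k = y := congrArg Subtype.val hk
  have hkj : k = j := by
    by_contra hkj
    have h3 := hsep k j hkj
    have h4 : dist (w k) (w j) ≤ dist (w k) y + dist y (w j) := dist_triangle _ _ _
    have h5 : dist (w k) y < ε := by
      rw [dist_comm, ← hyk]
      exact hφdist k
    linarith
  rw [← hyk, hkj]

end SplitAux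
/-- `ξ` is a splitting point of the zeros of `P` : every neighborhood of `ξ`
contains a point `ζ` such that `P ζ` has more distinct zeros than `P ξ`. -/
def IsSplitPtPoly {X : Type*} [TopologicalSpace X] (P : X → Polynomial ℂ) (ξ : X) : Prop :=
  ∀ U ∈ nhds ξ, ∃ ζ ∈ U, (P ξ).roots.toFinset.card < (P ζ).roots.toFinset.card

/-- characterization of non-splitting points for a continuous family of monic
polynomials of degree `n`. -/
theorem stmt0 {X : Type*} [TopologicalSpace X] (n : ℕ) (hn : 1 ≤ n)
    (P : X → Polynomial ℂ)
    (hmonic : ∀ ζ, (P ζ).Monic) (hdeg : ∀ ζ, (P ζ).natDegree = n)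
    (hcont : ∀ i : ℕ, Continuous fun ζ => (P ζ).coeff i)
    (ξ : X) (m : ℕ) (w : Fin m → ℂ) (hw : Function.Injective w)
    (hwroots : ∀ z : ℂ, z ∈ (P ξ).roots.toFinset ↔ ∃ j, w j = z) :
    ¬ IsSplitPtPoly P ξ ↔
      ∃ U : Set X, IsOpen U ∧ ξ ∈ U ∧
        ∃ lam : Fin m → X → ℂ,
          (∀ j, ContinuousOn (lam j) U) ∧
          (∀ j, lam j ξ = w j) ∧
          (∀ ζ ∈ U, ∀ j k : Fin m, j ≠ k → lam j ζ ≠ lam k ζ) ∧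
          (∀ ζ ∈ U, ∀ z : ℂ, z ∈ (P ζ).roots.toFinset ↔ ∃ j, lam j ζ = z) ∧
          (∀ ζ ∈ U, ∀ j, Polynomial.rootMultiplicity (lam j ζ) (P ζ) =
            Polynomial.rootMultiplicity (w j) (P ξ)) := by
  classical
  have hmcard : (P ξ).roots.toFinset.card = m := SplitAux.card_eq_of_roots w hw hwroots
  constructor
  · intro hns
    obtain ⟨ε, hε, hsep⟩ := SplitAux.exists_sep w hw
    have hwj : ∀ j, w j ∈ (P ξ).roots := fun j =>
      Multiset.mem_toFinset.mp ((hwroots (w j)).mpr ⟨j, rfl⟩)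
    have hrootsξ : ∀ z ∈ (P ξ).roots, ∃ j, w j = z := fun z hz =>
      (hwroots z).mp (Multiset.mem_toFinset.mpr hz)
    rw [IsSplitPtPoly] at hns
    push_neg at hns
    obtain ⟨U₀, hU₀, hcard₀⟩ := hns
    set Good : Set X := {ζ | (∀ z ∈ (P ζ).roots, ∃ j, dist z (w j) < ε) ∧
      (∀ j, ∃ z ∈ (P ζ).roots, dist z (w j) < ε) ∧ (P ζ).roots.toFinset.card ≤ m} with hGooddef
    have hGoodev : ∀ᶠ ζ in nhds ξ, ζ ∈ Good := by
      have h1 := SplitAux.roots_close hn P hmonic hdeg hcont ξ hε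
      have h2 : ∀ᶠ ζ in nhds ξ, ζ ∈ U₀ := hU₀
      filter_upwards [h1, h2] with ζ hζ hζU
      refine ⟨?_, ?_, ?_⟩
      · intro z hz
        obtain ⟨u, hu, hdu⟩ := hζ.1 z hz
        obtain ⟨j, rfl⟩ := hrootsξ u hu
        exact ⟨j, hdu⟩
      · intro j
        obtain ⟨z, hz, hdz⟩ := hζ.2 (w j) (hwj j)
        exact ⟨z, hz, hdz⟩
      · have h3 := hcard₀ ζ hζU
        rwa [hmcard] at h3
    set lam : Fin m → X → ℂ := fun j ζ =>
      if h : ∃ z ∈ (P ζ).roots, dist z (w j) < ε then h.choose else w j with hlamdef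
    have hlam : ∀ ζ ∈ Good, ∀ j, lam j ζ ∈ (P ζ).roots ∧ dist (lam j ζ) (w j) < ε := by
      intro ζ hζ j
      have h := hζ.2.1 j
      rw [hlamdef]
      simp only [dif_pos h]
      exact ⟨h.choose_spec.1, h.choose_spec.2⟩
    have huniq : ∀ ζ ∈ Good, ∀ j : Fin m, ∀ z ∈ (P ζ).roots, dist z (w j) < ε →
        ∀ z' ∈ (P ζ).roots, dist z' (w j) < ε → z = z' := fun ζ hζ =>
      SplitAux.key_uniq hε hsep hζ.1 hζ.2.1 hζ.2.2
    have hchar : ∀ ζ ∈ Good, ∀ z ∈ (P ζ).roots, ∀ j, dist z (w j) < ε → z = lam j ζ := by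
      intro ζ hζ z hz j hdz
      exact huniq ζ hζ j z hz hdz (lam j ζ) (hlam ζ hζ j).1 (hlam ζ hζ j).2
    have hrootsc : ∀ ζ ∈ Good, ∀ z, z ∈ (P ζ).roots.toFinset ↔ ∃ j, lam j ζ = z := by
      intro ζ hζ z
      constructor
      · intro hz
        have hz' := Multiset.mem_toFinset.mp hz
        obtain ⟨j, hj⟩ := hζ.1 z hz'
        exact ⟨j, (hchar ζ hζ z hz' j hj).symm⟩
      · rintro ⟨j, rfl⟩
        exact Multiset.mem_toFinset.mpr (hlam ζ hζ j).1
    have hdisj : ∀ ζ ∈ Good, ∀ j k : Fin m, j ≠ k → lam j ζ ≠ lam k ζ := by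
      intro ζ hζ j k hjk heq
      have h3 := hsep j k hjk
      have h4 : dist (w j) (w k) ≤ dist (w j) (lam j ζ) + dist (lam j ζ) (w k) :=
        dist_triangle _ _ _
      have h5 : dist (w j) (lam j ζ) < ε := by rw [dist_comm]; exact (hlam ζ hζ j).2
      have h6 : dist (lam j ζ) (w k) < ε := by rw [heq]; exact (hlam ζ hζ k).2
      linarith
    have hmultle : ∀ (ζ : X) (z : ℂ), Polynomial.rootMultiplicity z (P ζ) ≤ n := by
      intro ζ z
      rw [← Polynomial.count_roots]
      exact le_trans (Multiset.count_le_card _ _)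
        (le_of_eq (by rw [SplitAux.card_roots_monic, hdeg ζ]))
    have hlam_tend : ∀ j, Filter.Tendsto (fun ζ => lam j ζ)
        (nhds ξ ⊓ Filter.principal Good) (nhds (w j)) := by
      intro j
      rw [Metric.tendsto_nhds]
      intro ε' hε'
      have hεm : 0 < min ε ε' := lt_min hε hε'
      have hev := SplitAux.roots_close hn P hmonic hdeg hcont ξ hεm
      rw [Filter.eventually_inf_principal]
      filter_upwards [hev] with ζ hζ hζG
      obtain ⟨z, hzr, hzd⟩ := hζ.2 (w j) (hwj j)
      have hz2 : z = lam j ζ := hchar ζ hζG z hzr j (lt_of_lt_of_le hzd (min_le_left _ _))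
      rw [← hz2]
      exact lt_of_lt_of_le hzd (min_le_right _ _)
    set vstar : Fin m → Fin (n+1) := fun j =>
      ⟨Polynomial.rootMultiplicity (w j) (P ξ), Nat.lt_succ_of_le (hmultle ξ (w j))⟩
      with hvstardef
    have hAv : ∀ v : Fin m → Fin (n+1), v ≠ vstar → ∀ᶠ ζ in nhds ξ,
        ¬ (ζ ∈ Good ∧ ∀ j, Polynomial.rootMultiplicity (lam j ζ) (P ζ) = (v j : ℕ)) := by
      intro v hv
      by_contra hcon
      rw [Filter.not_eventually] at hcon
      have hne : Filter.NeBot (nhds ξ ⊓ Filter.principal {ζ | ζ ∈ Good ∧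
          ∀ j, Polynomial.rootMultiplicity (lam j ζ) (P ζ) = (v j : ℕ)}) := by
        rw [← Filter.frequently_mem_iff_neBot]
        exact hcon.mono fun ζ h => not_not.mp h
      set F := nhds ξ ⊓ Filter.principal {ζ | ζ ∈ Good ∧
          ∀ j, Polynomial.rootMultiplicity (lam j ζ) (P ζ) = (v j : ℕ)} with hFdef
      haveI := hne
      have hFle : F ≤ nhds ξ := inf_le_left
      have hFleG : F ≤ nhds ξ ⊓ Filter.principal Good := by
        refine le_inf inf_le_left (le_trans inf_le_right ?_)
        exact Filter.principal_mono.mpr fun ζ h => h.1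
      have heq : ∀ t : ℂ, (P ξ).eval t = ∏ j, (t - w j) ^ (v j : ℕ) := by
        intro t
        have t1 : Filter.Tendsto (fun ζ => (P ζ).eval t) F (nhds ((P ξ).eval t)) :=
          ((SplitAux.continuous_eval P hdeg hcont t).tendsto ξ).mono_left hFle
        have t2 : Filter.Tendsto (fun ζ => ∏ j, (t - lam j ζ) ^ (v j : ℕ)) F
            (nhds (∏ j, (t - w j) ^ (v j : ℕ))) := by
          refine tendsto_finset_prod _ fun j _ => ?_
          exact (tendsto_const_nhds.sub ((hlam_tend j).mono_left hFleG)).pow _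
        have hmemF : ∀ᶠ ζ in F, ζ ∈ Good ∧
            ∀ j, Polynomial.rootMultiplicity (lam j ζ) (P ζ) = (v j : ℕ) := by
          rw [hFdef, Filter.eventually_inf_principal]
          exact Filter.Eventually.of_forall fun ζ h => h
        have hequal : ∀ᶠ ζ in F, (P ζ).eval t = ∏ j, (t - lam j ζ) ^ (v j : ℕ) := by
          filter_upwards [hmemF] with ζ hζ
          have hinj : Function.Injective (fun j => lam j ζ) := by
            intro a b hab
            by_contra hne'
            exact hdisj ζ hζ.1 a b hne' hab
          have h7 := SplitAux.eval_eq_prod_pow (hmonic ζ) hinj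
            (fun z hz => (hrootsc ζ hζ.1 z).mp (Multiset.mem_toFinset.mpr hz)) t
          rw [h7]
          exact Finset.prod_congr rfl fun j _ => by rw [hζ.2 j]
        exact tendsto_nhds_unique (Filter.Tendsto.congr' hequal t1) t2
      have hpoly : P ξ = ∏ j, (Polynomial.X - Polynomial.C (w j)) ^ (v j : ℕ) :=
        Polynomial.funext fun t => by rw [heq t, SplitAux.eval_prod_pow]
      apply hv
      funext j
      have h8 : Polynomial.rootMultiplicity (w j) (P ξ) = (v j : ℕ) := by
        rw [hpoly]
        exact SplitAux.rootMultiplicity_prod_pow hw _ j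
      exact Fin.ext h8.symm
    have hmultq : ∀ᶠ ζ in nhds ξ, ζ ∈ Good →
        ∀ j, Polynomial.rootMultiplicity (lam j ζ) (P ζ) =
          Polynomial.rootMultiplicity (w j) (P ξ) := by
      have hall : ∀ᶠ ζ in nhds ξ, ∀ v : Fin m → Fin (n+1), v ≠ vstar →
          ¬ (ζ ∈ Good ∧ ∀ j, Polynomial.rootMultiplicity (lam j ζ) (P ζ) = (v j : ℕ)) := by
        rw [Filter.eventually_all]
        intro v
        by_cases hv : v = vstar
        · exact Filter.Eventually.of_forall fun ζ h => absurd hv h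
        · exact (hAv v hv).mono fun ζ h _ => h
      filter_upwards [hall] with ζ hζ hG j
      by_cases hv : (fun k => (⟨Polynomial.rootMultiplicity (lam k ζ) (P ζ),
          Nat.lt_succ_of_le (hmultle ζ (lam k ζ))⟩ : Fin (n+1))) = vstar
      · have h9 := congrArg Fin.val (congrFun hv j)
        simpa [hvstardef] using h9
      · exact absurd ⟨hG, fun k => rfl⟩ (hζ _ hv)
    have hW : ∀ᶠ ζ in nhds ξ, ζ ∈ Good ∧
        ∀ j, Polynomial.rootMultiplicity (lam j ζ) (P ζ) =
          Polynomial.rootMultiplicity (w j) (P ξ) := by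
      filter_upwards [hGoodev, hmultq] with ζ h1 h2
      exact ⟨h1, h2 h1⟩
    set W : Set X := {ζ | ζ ∈ Good ∧
        ∀ j, Polynomial.rootMultiplicity (lam j ζ) (P ζ) =
          Polynomial.rootMultiplicity (w j) (P ξ)} with hWdef
    have hWnhds : W ∈ nhds ξ := hW
    refine ⟨interior W, isOpen_interior, mem_interior_iff_mem_nhds.mpr hWnhds, lam,
      ?_, ?_, ?_, ?_, ?_⟩
    · -- continuity
      intro j ζ₀ hζ₀
      have hζ₀W : ζ₀ ∈ W := interior_subset hζ₀
      have hT : Filter.Tendsto (lam j) (nhdsWithin ζ₀ (interior W)) (nhds (lam j ζ₀)) := by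
        rw [Metric.tendsto_nhds]
        intro ε' hε'
        have hεm : 0 < min ε ε' := lt_min hε hε'
        have hev := Filter.Eventually.filter_mono
          (nhdsWithin_le_nhds (s := interior W) (a := ζ₀))
          (SplitAux.roots_close hn P hmonic hdeg hcont ζ₀ hεm)
        filter_upwards [hev, eventually_mem_nhdsWithin] with ζ hζ hζU
        have hζW : ζ ∈ W := interior_subset hζU
        obtain ⟨z, hzr, hzd⟩ := hζ.2 (lam j ζ₀) (hlam ζ₀ hζ₀W.1 j).1
        obtain ⟨k, hk⟩ := hζW.1.1 z hzr
        have hkj : k = j := by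
          by_contra hkj
          have h3 := hsep k j hkj
          have h4 : dist (w k) (w j) ≤ dist (w k) z + dist z (lam j ζ₀) +
              dist (lam j ζ₀) (w j) := dist_triangle4 _ _ _ _
          have h5 : dist (w k) z < ε := by rw [dist_comm]; exact hk
          have h7 : dist (lam j ζ₀) (w j) < ε := (hlam ζ₀ hζ₀W.1 j).2
          have h8 : min ε ε' ≤ ε := min_le_left _ _
          linarith
        have hz2 : z = lam j ζ := hchar ζ hζW.1 z hzr j (by rwa [hkj] at hk)
        rw [← hz2]
        exact lt_of_lt_of_le hzd (min_le_right _ _)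
      exact hT
    · -- lam j ξ = w j
      intro j
      have hξW : ξ ∈ W := mem_of_mem_nhds hWnhds
      have h1 := (hlam ξ hξW.1 j).1
      obtain ⟨k, hk⟩ := hrootsξ _ h1
      have h2 := (hlam ξ hξW.1 j).2
      by_cases hkj : k = j
      · rw [← hk, hkj]
      · exfalso
        have h3 := hsep k j hkj
        have h4 : dist (w k) (w j) < ε := by rw [hk]; exact h2
        linarith
    · intro ζ hζ
      exact hdisj ζ (interior_subset hζ : ζ ∈ W).1
    · intro ζ hζ
      exact hrootsc ζ (interior_subset hζ : ζ ∈ W).1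
    · intro ζ hζ
      exact (interior_subset hζ : ζ ∈ W).2
  · rintro ⟨U, hUo, hξU, lam, _hcont', _hlamξ, hdistinct, hroots, _hmult⟩ hsplit
    obtain ⟨ζ, hζU, hlt⟩ := hsplit U (hUo.mem_nhds hξU)
    have h2 : (P ζ).roots.toFinset.card = m := by
      refine SplitAux.card_eq_of_roots (fun j => lam j ζ) ?_ (hroots ζ hζU)
      intro a b hab
      by_contra hne
      exact hdistinct ζ hζU a b hne hab
    rw [hmcard, h2] at hlt
    exact lt_irrefl m hlt
end

section
/- Let n ≥ 1 and let p be a monic complex polynomial of degree n with exactly m distinct zeros. For k ≥ 0 let 𝒫_k denote the complex vector space of polynomials of degree ≤ k (together with the zero polynomial), and let 𝒫_{−1} = {0}. Let Φ : 𝒫_{n−2} × 𝒫_{n−1} → 𝒫_{2n−2} be the linear map Φ(s,q) = p·s − p'·q, where p' is the derivative of p. Then the rank of Φ (the dimension of its range) equals n + m − 1. -/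
open Polynomial

noncomputable instance instFinDimDegreeLT (n : ℕ) : FiniteDimensional ℂ (degreeLT ℂ n) :=
  Module.Finite.equiv (degreeLTEquiv ℂ n).symm

lemma finrank_degreeLT' (n : ℕ) : Module.finrank ℂ (degreeLT ℂ n) = n := by
  rw [(degreeLTEquiv ℂ n).finrank_eq]; simp

lemma mul_mem_degreeLT' {f t : Polynomial ℂ} {d e k : ℕ} (hf : f.natDegree ≤ d)
    (ht : t ∈ degreeLT ℂ e) (hk : d + e ≤ k) : f * t ∈ degreeLT ℂ k := by
  rw [mem_degreeLT] at ht ⊢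
  rcases eq_or_ne t 0 with rfl | ht0
  · rw [mul_zero, degree_zero]; exact_mod_cast WithBot.bot_lt_coe k
  rcases eq_or_ne f 0 with rfl | hf0
  · rw [zero_mul, degree_zero]; exact_mod_cast WithBot.bot_lt_coe k
  have h1 : t.natDegree < e := natDegree_lt_iff_degree_lt ht0 |>.mpr ht
  have : (f * t).natDegree < k := by
    rw [natDegree_mul hf0 ht0]; omega
  exact (natDegree_lt_iff_degree_lt (mul_ne_zero hf0 ht0)).mp this

/-- for a monic polynomial `p` of degree `n ≥ 1` with exactly `m` distinct zeros,
the linear map `Φ(s,q) = p·s − p'·q` from `𝒫_{n-2} × 𝒫_{n-1}` to `𝒫_{2n-2}` has rank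
`n + m − 1`.  Here `𝒫_k` (polynomials of degree `≤ k` together with `0`) is represented by
`Polynomial.degreeLT ℂ (k+1)`. -/
theorem stmt2 (n : ℕ) (hn : 1 ≤ n) (p : Polynomial ℂ) (hp : p.Monic)
    (hdeg : p.natDegree = n)
    (m : ℕ) (hm : p.roots.toFinset.card = m)
    (Φ : (Polynomial.degreeLT ℂ (n - 1) × Polynomial.degreeLT ℂ n) →ₗ[ℂ]
      Polynomial.degreeLT ℂ (2 * n - 1))
    (hΦ : ∀ sq : Polynomial.degreeLT ℂ (n - 1) × Polynomial.degreeLT ℂ n,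
      (Φ sq : Polynomial ℂ) = p * (sq.1 : Polynomial ℂ) -
        Polynomial.derivative p * (sq.2 : Polynomial ℂ)) :
    Module.finrank ℂ (LinearMap.range Φ) = n + m - 1 := by
  classical
  have hp0 : p ≠ 0 := hp.ne_zero
  set S := p.roots.toFinset with hS
  set μ : ℂ → ℕ := fun r => p.rootMultiplicity r with hμ
  have hsplits : p.Splits := IsAlgClosed.splits p
  have hcard : p.roots.card = n := by
    rw [← hdeg]; exact splits_iff_card_roots.mp hsplits
  have hμpos : ∀ r ∈ S, 1 ≤ μ r := by
    intro r hr
    rw [Multiset.mem_toFinset, mem_roots hp0] at hr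
    exact (rootMultiplicity_pos hp0).mpr hr
  have hsum : ∑ r ∈ S, μ r = n := by
    have := Multiset.toFinset_sum_count_eq p.roots
    simp only [count_roots] at this
    rw [← hcard]; exact this
  have hm_le : m ≤ n := by rw [← hm, ← hcard]; exact Multiset.toFinset_card_le _
  have hm1 : 1 ≤ m := by
    obtain ⟨z, hz⟩ := Complex.exists_root (f := p) (by
      rw [degree_eq_natDegree hp0, hdeg]; exact_mod_cast hn)
    have : z ∈ S := by rw [hS, Multiset.mem_toFinset, mem_roots hp0]; exact hz
    rw [← hm]; exact Finset.card_pos.mpr ⟨z, this⟩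
  set a : Polynomial ℂ := ∏ r ∈ S, (X - C r) with ha
  set g : Polynomial ℂ := ∏ r ∈ S, (X - C r) ^ (μ r - 1) with hg
  have ha_monic : a.Monic := monic_prod_of_monic _ _ fun r _ => monic_X_sub_C r
  have hg_monic : g.Monic := monic_prod_of_monic _ _ fun r _ => (monic_X_sub_C r).pow _
  have ha0 : a ≠ 0 := ha_monic.ne_zero
  have hg0 : g ≠ 0 := hg_monic.ne_zero
  have hpag : p = g * a := by
    conv_lhs => rw [hsplits.eq_prod_roots_of_monic hp]
    rw [Finset.prod_multiset_map_count, ← Finset.prod_mul_distrib]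
    refine Finset.prod_congr rfl fun r hr => ?_
    rw [count_roots, ← pow_succ]
    congr 1
    have h1 : 1 ≤ p.rootMultiplicity r := hμpos r hr
    show p.rootMultiplicity r = μ r - 1 + 1
    have h2 : μ r = p.rootMultiplicity r := rfl
    omega
  have hdega : a.natDegree = m := by
    rw [ha, natDegree_prod _ _ fun r _ => X_sub_C_ne_zero r]
    simp [hm]
  have hdegg : g.natDegree = n - m := by
    rw [hg, natDegree_prod _ _ fun r _ => pow_ne_zero _ (X_sub_C_ne_zero r)]
    simp only [natDegree_pow, natDegree_X_sub_C, mul_one]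
    rw [Finset.sum_tsub_distrib S (fun r hr => hμpos r hr)]
    simp [hsum, hm]
  -- derivative
  have hd0 : derivative p ≠ 0 := by
    intro h
    have := natDegree_eq_zero_of_derivative_eq_zero h
    omega
  have hdegd : (derivative p).natDegree = n - 1 := by
    have := degree_derivative_eq p (by omega)
    rw [hdeg] at this
    exact natDegree_eq_of_degree_eq_some this
  have hmult : ∀ r ∈ S, (derivative p).rootMultiplicity r = μ r - 1 := by
    intro r hr
    rw [Multiset.mem_toFinset, mem_roots hp0] at hr
    exact derivative_rootMultiplicity_of_root hr
  have hgd : g ∣ derivative p := by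
    refine Finset.prod_dvd_of_coprime ?_ fun r hr => ?_
    · intro r hr s hs hrs
      exact (isCoprime_X_sub_C_of_isUnit_sub (by
        simpa using sub_ne_zero_of_ne hrs)).pow
    · exact (le_rootMultiplicity_iff hd0).mp (le_of_eq (hmult r hr).symm)
  obtain ⟨b, hb⟩ := hgd
  have hb0 : b ≠ 0 := by
    intro h; rw [h, mul_zero] at hb; exact hd0 hb
  have hdegb : b.natDegree = m - 1 := by
    have := natDegree_mul hg0 hb0
    rw [← hb, hdegd, hdegg] at this
    omega
  have hcop : IsCoprime a b := by
    rw [ha]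
    refine IsCoprime.prod_left fun r hr => ?_
    have hirr : Irreducible (X - C r) := irreducible_X_sub_C r
    rw [(hirr.prime.coprime_iff_not_dvd)]
    intro hdvd
    have h1 : (X - C r) ^ (μ r - 1) ∣ g := Finset.dvd_prod_of_mem _ hr
    have h2 : (X - C r) ^ (μ r) ∣ derivative p := by
      have := mul_dvd_mul h1 hdvd
      rw [← pow_succ] at this
      rw [hb]
      have hk : μ r - 1 + 1 = μ r := by have := hμpos r hr; omega
      rwa [hk] at this
    have := (le_rootMultiplicity_iff hd0).mpr h2
    rw [hmult r hr] at this
    have := hμpos r hr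
    omega
  -- the kernel parametrization
  have hmemb : ∀ t : degreeLT ℂ (n - m), b * (t : Polynomial ℂ) ∈ degreeLT ℂ (n - 1) :=
    fun t => mul_mem_degreeLT' (hdegb.le) t.2 (by omega)
  have hmema : ∀ t : degreeLT ℂ (n - m), a * (t : Polynomial ℂ) ∈ degreeLT ℂ n :=
    fun t => mul_mem_degreeLT' (hdega.le) t.2 (by omega)
  have hmemb' : ∀ x ∈ degreeLT ℂ (n - m), (LinearMap.mulLeft ℂ b) x ∈ degreeLT ℂ (n - 1) :=
    fun x hx => hmemb ⟨x, hx⟩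
  have hmema' : ∀ x ∈ degreeLT ℂ (n - m), (LinearMap.mulLeft ℂ a) x ∈ degreeLT ℂ n :=
    fun x hx => hmema ⟨x, hx⟩
  set Ψ : degreeLT ℂ (n - m) →ₗ[ℂ] (degreeLT ℂ (n - 1) × degreeLT ℂ n) :=
    ((LinearMap.mulLeft ℂ b).restrict hmemb').prod ((LinearMap.mulLeft ℂ a).restrict hmema')
    with hΨ
  have hΨ1 : ∀ t : degreeLT ℂ (n - m), ((Ψ t).1 : Polynomial ℂ) = b * t := fun t => rfl
  have hΨ2 : ∀ t : degreeLT ℂ (n - m), ((Ψ t).2 : Polynomial ℂ) = a * t := fun t => rfl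
  have hker : LinearMap.ker Φ = LinearMap.range Ψ := by
    ext sq
    simp only [LinearMap.mem_ker, LinearMap.mem_range]
    constructor
    · intro h
      have h0 : (Φ sq : Polynomial ℂ) = 0 := by rw [h]; rfl
      rw [hΦ sq, sub_eq_zero] at h0
      set s : Polynomial ℂ := (sq.1 : Polynomial ℂ) with hs
      set q : Polynomial ℂ := (sq.2 : Polynomial ℂ) with hq
      have hcancel : a * s = b * q := by
        apply mul_left_cancel₀ hg0
        calc g * (a * s) = (g * a) * s := by ring
        _ = (g * b) * q := by rw [← hpag, ← hb]; exact h0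
        _ = g * (b * q) := by ring
      have hadvd : a ∣ b * q := ⟨s, hcancel.symm⟩
      obtain ⟨t, ht⟩ := hcop.dvd_of_dvd_mul_left hadvd
      have htmem : t ∈ degreeLT ℂ (n - m) := by
        rw [mem_degreeLT]
        rcases eq_or_ne t 0 with rfl | ht0
        · rw [degree_zero]; exact_mod_cast WithBot.bot_lt_coe (n - m)
        have hq0 : q ≠ 0 := by rw [ht]; exact mul_ne_zero ha0 ht0
        have hqd : q.natDegree < n := by
          have := sq.2.2
          rw [mem_degreeLT] at this
          exact (natDegree_lt_iff_degree_lt hq0).mpr this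
        have : t.natDegree < n - m := by
          have := natDegree_mul ha0 ht0
          rw [← ht, hdega] at this
          omega
        exact (natDegree_lt_iff_degree_lt ht0).mp this
      have hseq : s = b * t := by
        apply mul_left_cancel₀ ha0
        rw [hcancel, ht]; ring
      refine ⟨⟨t, htmem⟩, ?_⟩
      apply Prod.ext
      · apply Subtype.ext
        rw [hΨ1]
        exact hseq.symm
      · apply Subtype.ext
        rw [hΨ2]
        exact ht.symm
    · rintro ⟨t, rfl⟩
      apply Subtype.ext
      show (Φ (Ψ t) : Polynomial ℂ) = 0
      rw [hΦ, hΨ1, hΨ2, hb, hpag]; ring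
  have hinj : Function.Injective Ψ := by
    rw [← LinearMap.ker_eq_bot]
    rw [Submodule.eq_bot_iff]
    intro t ht
    rw [LinearMap.mem_ker] at ht
    have h1 : a * (t : Polynomial ℂ) = 0 := by
      have h2 : ((Ψ t).2 : Polynomial ℂ) = (((0 : degreeLT ℂ (n - 1) × degreeLT ℂ n)).2 : Polynomial ℂ) := by
        rw [ht]
      rw [hΨ2] at h2
      simpa using h2
    apply Subtype.ext
    exact (mul_eq_zero.mp h1).resolve_left ha0
  have hkerrank : Module.finrank ℂ (LinearMap.ker Φ) = n - m := by
    rw [hker, LinearMap.finrank_range_of_inj hinj, finrank_degreeLT']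
  have hrn := LinearMap.finrank_range_add_finrank_ker Φ
  rw [hkerrank, Module.finrank_prod, finrank_degreeLT', finrank_degreeLT'] at hrn
  omega
end

section
/- Let X be a nonempty connected open subset of ℂ^N and let M : X → Mat(n×m,ℂ) be holomorphic. Set r_max = max_{ζ∈X} rank M(ζ). Then a point ξ ∈ X is a jump point of rank M if and only if rank M(ξ) < r_max; equivalently, the set of jump points of rank M is the common zero set of all minors of M of order r_max. -/
open Matrix Set

/-- `ξ` is a jump point of `rank M` (relative to `S`) : every neighborhood of `ξ` in `S`
contains a point `ζ` with `rank M ζ > rank M ξ`. -/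
def IsRankJumpPt {E : Type*} [TopologicalSpace E] {n m : ℕ} (S : Set E)
    (M : E → Matrix (Fin n) (Fin m) ℂ) (ξ : E) : Prop :=
  ∀ U ∈ nhdsWithin ξ S, ∃ ζ ∈ U, (M ξ).rank < (M ζ).rank

namespace Stmt3Aux

variable {n m r s : ℕ}

lemma rank_submatrix_le'' (A : Matrix (Fin n) (Fin m) ℂ) (f : Fin r → Fin n)
    (g : Fin s → Fin m) : (A.submatrix f g).rank ≤ A.rank := by
  have h2 : A * (1 : Matrix (Fin m) (Fin m) ℂ).submatrix (Equiv.refl (Fin m)) g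
      = A.submatrix id g := by
    rw [Matrix.mul_submatrix_one]; rfl
  have h1 : (1 : Matrix (Fin n) (Fin n) ℂ).submatrix f (Equiv.refl (Fin n)) * (A.submatrix id g)
      = A.submatrix f g := by
    rw [Matrix.one_submatrix_mul]; rfl
  calc (A.submatrix f g).rank ≤ (A.submatrix id g).rank := by
        rw [← h1]; exact Matrix.rank_mul_le_right _ _
    _ ≤ A.rank := by rw [← h2]; exact Matrix.rank_mul_le_left _ _

lemma rank_ge_of_minor {A : Matrix (Fin n) (Fin m) ℂ} {f : Fin r → Fin n} {g : Fin r → Fin m}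
    (h : (A.submatrix f g).det ≠ 0) : r ≤ A.rank := by
  have hu : IsUnit (A.submatrix f g) :=
    (Matrix.isUnit_iff_isUnit_det _).mpr (isUnit_iff_ne_zero.mpr h)
  have h1 : (A.submatrix f g).rank = r := by
    rw [Matrix.rank_of_isUnit _ hu, Fintype.card_fin]
  calc r = (A.submatrix f g).rank := h1.symm
    _ ≤ A.rank := rank_submatrix_le'' A f g

lemma exists_cols {A : Matrix (Fin n) (Fin m) ℂ} (hr : r ≤ A.rank) :
    ∃ g : Fin r → Fin m, LinearIndependent ℂ (fun i => Aᵀ (g i)) := by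
  classical
  obtain ⟨b, hbsub, hbspan, hbind⟩ := exists_linearIndependent ℂ (Set.range Aᵀ)
  have hbfin : b.Finite := (Set.finite_range Aᵀ).subset hbsub
  haveI : Fintype b := hbfin.fintype
  have hcard : A.rank = b.toFinset.card := by
    rw [Matrix.rank_eq_finrank_span_cols]
    change Module.finrank ℂ (Submodule.span ℂ (Set.range Aᵀ)) = _
    rw [← hbspan, finrank_span_set_eq_card hbind]
  have hr' : Fintype.card (Fin r) ≤ Fintype.card b := by
    rw [Fintype.card_fin, ← Set.toFinset_card, ← hcard]; exact hr
  obtain ⟨e⟩ := Function.Embedding.nonempty_of_card_le hr'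
  choose g hg using fun i : Fin r => hbsub (e i).2
  refine ⟨g, ?_⟩
  have heq : (fun i => Aᵀ (g i)) = (Subtype.val : b → (Fin n → ℂ)) ∘ e := by
    funext i; exact hg i
  rw [heq]
  exact hbind.comp e e.injective

lemma exists_minor {A : Matrix (Fin n) (Fin m) ℂ} (hr : r ≤ A.rank) :
    ∃ (f : Fin r → Fin n) (g : Fin r → Fin m), (A.submatrix f g).det ≠ 0 := by
  obtain ⟨g, hg⟩ := exists_cols hr
  have h1 : (A.submatrix id g).rank = r := by
    rw [Matrix.rank_eq_finrank_span_cols]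
    have hre : Set.range (A.submatrix id g).col = Set.range fun i => Aᵀ (g i) := rfl
    rw [hre, finrank_span_eq_card hg, Fintype.card_fin]
  have hB : r ≤ (A.submatrix id g)ᵀ.rank := by
    rw [Matrix.rank_transpose]; exact h1.ge
  obtain ⟨f, hf⟩ := exists_cols hB
  have hrows : LinearIndependent ℂ (fun i => (A.submatrix f g) i) := hf
  have hu : IsUnit (A.submatrix f g) := Matrix.linearIndependent_rows_iff_isUnit.mp hrows
  exact ⟨f, g, ((Matrix.isUnit_iff_isUnit_det _).mp hu).ne_zero⟩

variable {Np : ℕ}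

lemma diffOn_prod {ι : Type*} {X : Set (Fin Np → ℂ)} (u : Finset ι)
    (F : ι → (Fin Np → ℂ) → ℂ) (h : ∀ i ∈ u, DifferentiableOn ℂ (F i) X) :
    DifferentiableOn ℂ (fun x => ∏ i ∈ u, F i x) X := by
  classical
  induction u using Finset.induction_on with
  | empty => simpa using differentiableOn_const (1 : ℂ)
  | insert _ _ hx ih =>
    simp_rw [Finset.prod_insert hx]
    exact (h _ (Finset.mem_insert_self _ _)).mul
      (ih fun i hi => h i (Finset.mem_insert_of_mem hi))

lemma minor_diffOn {X : Set (Fin Np → ℂ)} {M : (Fin Np → ℂ) → Matrix (Fin n) (Fin m) ℂ}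
    (hholo : ∀ i j, DifferentiableOn ℂ (fun ζ => M ζ i j) X)
    (f : Fin r → Fin n) (g : Fin r → Fin m) :
    DifferentiableOn ℂ (fun ζ => ((M ζ).submatrix f g).det) X := by
  have heq : (fun ζ => ((M ζ).submatrix f g).det) =
      fun ζ => ∑ σ : Equiv.Perm (Fin r),
        ((Equiv.Perm.sign σ : ℤ) : ℂ) * ∏ i, M ζ (f (σ i)) (g i) := by
    funext ζ; rw [Matrix.det_apply']; rfl
  rw [heq]
  apply DifferentiableOn.fun_sum
  intro σ _
  exact ((diffOn_prod Finset.univ _ (fun i _ => hholo (f (σ i)) (g i)))).const_mul _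

/-- Identity theorem for holomorphic functions on a connected open subset of `ℂ^N`. -/
lemma eqOn_zero_of_connected {X : Set (Fin Np → ℂ)} (hXo : IsOpen X)
    (hXc : IsPreconnected X) {h : (Fin Np → ℂ) → ℂ} (hd : DifferentiableOn ℂ h X)
    {ξ : Fin Np → ℂ} (hξ : ξ ∈ X) (h0 : ∀ᶠ x in nhds ξ, h x = 0) :
    Set.EqOn h 0 X := by
  classical
  have ball_lemma : ∀ y ∈ X, ∀ ρ > (0:ℝ), Metric.ball y ρ ⊆ X →
      (∀ᶠ x in nhds y, h x = 0) → ∀ z ∈ Metric.ball y ρ, h z = 0 := by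
    intro y hy ρ hρ hball hev z hz
    obtain ⟨δ, hδ, hδ0⟩ := Metric.eventually_nhds_iff.mp hev
    by_cases hzy : z = y
    · subst hzy; exact hδ0 (by simpa using hδ)
    set v := z - y with hvdef
    have hvne : (0:ℝ) < ‖v‖ := by
      simpa [hvdef, sub_eq_zero] using (norm_pos_iff.mpr (sub_ne_zero.mpr hzy))
    set T := Metric.ball (0:ℂ) (ρ / ‖v‖) with hT
    have hmaps : ∀ t ∈ T, y + t • v ∈ Metric.ball y ρ := by
      intro t ht
      rw [Metric.mem_ball, dist_eq_norm] at ht ⊢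
      simp only [add_sub_cancel_left, norm_smul]
      rw [sub_zero] at ht
      calc ‖t‖ * ‖v‖ < (ρ / ‖v‖) * ‖v‖ := by
            exact mul_lt_mul_of_pos_right ht hvne
        _ = ρ := div_mul_cancel₀ _ hvne.ne'
    have hgd : DifferentiableOn ℂ (fun t : ℂ => h (y + t • v)) T := by
      apply DifferentiableOn.comp hd
      · exact ((differentiable_id.smul_const v).const_add y).differentiableOn
      · intro t ht; exact hball (hmaps t ht)
    have hga : AnalyticOnNhd ℂ (fun t : ℂ => h (y + t • v)) T :=
      hgd.analyticOnNhd Metric.isOpen_ball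
    have hg0 : (fun t : ℂ => h (y + t • v)) =ᶠ[nhds (0:ℂ)] 0 := by
      filter_upwards [Metric.ball_mem_nhds (0:ℂ) (div_pos hδ hvne)] with t ht
      rw [Metric.mem_ball, dist_zero_right] at ht
      apply hδ0
      rw [dist_eq_norm]
      simp only [add_sub_cancel_left, norm_smul]
      calc ‖t‖ * ‖v‖ < (δ / ‖v‖) * ‖v‖ := mul_lt_mul_of_pos_right ht hvne
        _ = δ := div_mul_cancel₀ _ hvne.ne'
    have hTpre : IsPreconnected T := (convex_ball (0:ℂ) _).isPreconnected
    have h0T : (0:ℂ) ∈ T := Metric.mem_ball_self (div_pos hρ hvne)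
    have heq := hga.eqOn_zero_of_preconnected_of_eventuallyEq_zero hTpre h0T hg0
    have h1T : (1:ℂ) ∈ T := by
      rw [Metric.mem_ball, dist_zero_right, norm_one, lt_div_iff₀ hvne, one_mul]
      rw [Metric.mem_ball, dist_eq_norm] at hz
      exact hz
    have := heq h1T
    simpa [hvdef] using this
  set V := {x | x ∈ X ∧ ∀ᶠ y in nhds x, h y = 0} with hVdef
  have hVopen : IsOpen V := by
    rw [isOpen_iff_mem_nhds]
    rintro x ⟨hxX, hxev⟩
    obtain ⟨U, hU0, hUopen, hxU⟩ := eventually_nhds_iff.mp hxev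
    have : X ∩ U ⊆ V := by
      rintro x' ⟨hx'X, hx'U⟩
      exact ⟨hx'X, Filter.eventually_of_mem (hUopen.mem_nhds hx'U) hU0⟩
    exact Filter.mem_of_superset
      (Filter.inter_mem (hXo.mem_nhds hxX) (hUopen.mem_nhds hxU)) this
  have hclosure : ∀ x ∈ X, x ∈ closure V → x ∈ V := by
    intro x hxX hxc
    obtain ⟨ρ, hρ, hball⟩ := Metric.isOpen_iff.mp hXo x hxX
    obtain ⟨y, hyV, hyd⟩ := Metric.mem_closure_iff.mp hxc (ρ/2) (by linarith)
    have hby : Metric.ball y (ρ/2) ⊆ X := by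
      intro w hw
      apply hball
      rw [Metric.mem_ball] at hw ⊢
      calc dist w x ≤ dist w y + dist y x := dist_triangle _ _ _
        _ < ρ/2 + ρ/2 := by
            rw [dist_comm y x]; exact add_lt_add hw hyd
        _ = ρ := by ring
    have hzero : ∀ z ∈ Metric.ball y (ρ/2), h z = 0 :=
      ball_lemma y hyV.1 (ρ/2) (by linarith) hby hyV.2
    have hxball : x ∈ Metric.ball y (ρ/2) := by
      rw [Metric.mem_ball]; exact hyd
    exact ⟨hxX, Filter.eventually_of_mem (Metric.isOpen_ball.mem_nhds hxball) hzero⟩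
  have hsub : X ⊆ V ∪ (closure V)ᶜ := by
    intro x hx
    by_cases hc : x ∈ closure V
    · exact Or.inl (hclosure x hx hc)
    · exact Or.inr hc
  have hne : (X ∩ V).Nonempty := ⟨ξ, hξ, hξ, h0⟩
  have hempty : ¬ (X ∩ (closure V)ᶜ).Nonempty := by
    intro hne'
    obtain ⟨w, hwX, hwV, hwc⟩ :=
      hXc V (closure V)ᶜ hVopen (isClosed_closure.isOpen_compl) hsub hne hne'
    exact hwc (subset_closure hwV)
  intro x hx
  have hxV : x ∈ V := by
    by_cases hc : x ∈ closure V
    · exact hclosure x hx hc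
    · exact absurd ⟨x, hx, hc⟩ hempty
  exact hxV.2.self_of_nhds

end Stmt3Aux

open Stmt3Aux

/-- for a holomorphic matrix function `M` on a nonempty connected open
`X ⊆ ℂ^N` with maximal rank `r`, a point `ξ ∈ X` is a jump point of `rank M` iff
`rank M ξ < r`, iff all minors of order `r` of `M` vanish at `ξ`. -/
theorem stmt3 {N n m : ℕ} (X : Set (Fin N → ℂ)) (hXo : IsOpen X) (hXne : X.Nonempty)
    (hXc : IsConnected X)
    (M : (Fin N → ℂ) → Matrix (Fin n) (Fin m) ℂ)
    (hholo : ∀ i j, DifferentiableOn ℂ (fun ζ => M ζ i j) X)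
    (r : ℕ) (hub : ∀ ζ ∈ X, (M ζ).rank ≤ r) (hmax : ∃ ζ ∈ X, (M ζ).rank = r) :
    ∀ ξ ∈ X,
      (IsRankJumpPt X M ξ ↔ (M ξ).rank < r) ∧
      (IsRankJumpPt X M ξ ↔
        ∀ (f : Fin r → Fin n) (g : Fin r → Fin m), ((M ξ).submatrix f g).det = 0) := by
  obtain ⟨ζ₀, hζ₀X, hζ₀r⟩ := hmax
  obtain ⟨f₀, g₀, hm₀⟩ := exists_minor (A := M ζ₀) hζ₀r.ge
  intro ξ hξ
  have main : IsRankJumpPt X M ξ ↔ (M ξ).rank < r := by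
    constructor
    · intro hjump
      by_contra hlt
      push_neg at hlt
      obtain ⟨ζ, hζX, hζgt⟩ := hjump X self_mem_nhdsWithin
      exact absurd (hub ζ hζX) (not_le.mpr (lt_of_le_of_lt hlt hζgt))
    · intro hlt U hU
      by_contra hno
      push_neg at hno
      -- all points of U have rank ≤ rank M ξ < r, so the minor h₀ vanishes on U
      have hUnhds : U ∈ nhds ξ := by
        rwa [hXo.nhdsWithin_eq hξ] at hU
      have hev : ∀ᶠ x in nhds ξ, (fun ζ => ((M ζ).submatrix f₀ g₀).det) x = 0 := by
        filter_upwards [hUnhds] with x hxU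
        by_contra hne
        have : r ≤ (M x).rank := rank_ge_of_minor hne
        exact absurd (hno x hxU) (not_le.mpr (lt_of_lt_of_le hlt this))
      have hEq := eqOn_zero_of_connected hXo hXc.isPreconnected
        (minor_diffOn hholo f₀ g₀) hξ hev
      exact hm₀ (hEq hζ₀X)
  refine ⟨main, main.trans ⟨?_, ?_⟩⟩
  · intro hlt f g
    by_contra hne
    exact absurd (rank_ge_of_minor hne) (not_le.mpr hlt)
  · intro hall
    by_contra hge
    push_neg at hge
    obtain ⟨f, g, hne⟩ := exists_minor (A := M ξ) hge
    exact hne (hall f g)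
end
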